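/- In the wall-crossing setup, set l_i := max(−D_i·e, 0) for 1 ≤ i ≤ m, let 𝒜̃ := {I ∪ {m+1} : I ∈ 𝒜_0^thick} ∪ {I : I ∈ 𝒜_0^thick and I ∩ M_0 ∈ 𝒜_0^thin}, and let Ũ := ⋃_{Ĩ∈𝒜̃} {z ∈ ℂ^{m+1} : z_i ≠ 0 for all i ∈ Ĩ}. Then the polynomial map F : ℂ^{m+1} → ℂ^m defined by F(z_1,…,z_m,z_{m+1}) := (z_1·z_{m+1}^{l_1}, …, z_m·z_{m+1}^{l_m}) maps Ũ into U_{ω_+}. -/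

import Mathlib

/- Formalization of a statement from "The Crepant Transformation Conjecture
for Toric Complete Intersections" (Coates–Iritani–Jiang).

GIT data: `𝕃 = ℤ^r` (modelled by `Fin r → ℤ`), characters `D_1, …, D_m ∈ 𝕃^∨`
(modelled by `D : Fin m → Fin r → ℤ`, viewing `𝕃^∨ ⊗ ℝ` as `Fin r → ℝ`). -/

open scoped Classical

noncomputable section

namespace CTC

/-- The image of the integral character `D i` in `𝕃^∨ ⊗ ℝ = ℝ^r`. -/
def DR {r m : ℕ} (D : Fin m → Fin r → ℤ) (i : Fin m) : Fin r → ℝ :=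
  fun a => (D i a : ℝ)

/-- Integer pairing `v · e` between `𝕃^∨` and `𝕃`. -/
def pairZ {r : ℕ} (v e : Fin r → ℤ) : ℤ := ∑ a, v a * e a

/-- Real pairing `v · e` between `𝕃^∨ ⊗ ℝ` and `𝕃`. -/
def pairR {r : ℕ} (v : Fin r → ℝ) (e : Fin r → ℤ) : ℝ := ∑ a, v a * (e a : ℝ)

/-- Rational pairing `D_i · f` between a character `D_i ∈ 𝕃^∨` and `f ∈ 𝕃 ⊗ ℚ`. -/
def dotDQ {r : ℕ} (Di : Fin r → ℤ) (f : Fin r → ℚ) : ℚ := ∑ a, (Di a : ℚ) * f a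

/-- `∠_I := { Σ_{i ∈ I} a_i D_i : a_i ∈ ℝ, a_i > 0 }`; in particular `∠_∅ = {0}`. -/
def angleCone {m : ℕ} {E : Type*} [AddCommMonoid E] [Module ℝ E]
    (D : Fin m → E) (I : Finset (Fin m)) : Set E :=
  { w | ∃ a : Fin m → ℝ, (∀ i ∈ I, 0 < a i) ∧ w = ∑ i ∈ I, a i • D i }

/-- The set of anticones `𝒜_ω := { I ⊆ {1,…,m} : ω ∈ ∠_I }`. -/
def anticones {r m : ℕ} (D : Fin m → Fin r → ℤ) (ω : Fin r → ℝ) :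
    Set (Finset (Fin m)) :=
  { I | ω ∈ angleCone (DR D) I }

/-- The extended ample cone `C_ω := ⋂_{I ∈ 𝒜_ω} ∠_I`. -/
def extAmpleCone {r m : ℕ} (D : Fin m → Fin r → ℤ) (ω : Fin r → ℝ) :
    Set (Fin r → ℝ) :=
  ⋂ I ∈ anticones D ω, angleCone (DR D) I

/-- `U_ω := ⋃_{I ∈ 𝒜_ω} { z ∈ ℂ^m : z_i ≠ 0 for all i ∈ I }`. -/
def Uset {r m : ℕ} (D : Fin m → Fin r → ℤ) (ω : Fin r → ℝ) : Set (Fin m → ℂ) :=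
  ⋃ I ∈ anticones D ω, { z : Fin m → ℂ | ∀ i ∈ I, z i ≠ 0 }

/-- `S_ω := { i : {1,…,m} ∖ {i} ∉ 𝒜_ω }`. -/
def Sset {r m : ℕ} (D : Fin m → Fin r → ℤ) (ω : Fin r → ℝ) : Finset (Fin m) :=
  Finset.univ.filter fun i => Finset.univ.erase i ∉ anticones D ω

/-- Assumption (⋆): `{1,…,m} ∈ 𝒜_ω`, and for each `I ∈ 𝒜_ω` the set
`{D_i : i ∈ I}` spans `𝕃^∨ ⊗ ℝ` over `ℝ`. -/
def AssumptionStar {r m : ℕ} (D : Fin m → Fin r → ℤ) (ω : Fin r → ℝ) : Prop :=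
  Finset.univ ∈ anticones D ω ∧
    ∀ I ∈ anticones D ω, Submodule.span ℝ (DR D '' (I : Set (Fin m))) = ⊤

/-- The wall `W = { v ∈ 𝕃^∨ ⊗ ℝ : v · e = 0 }`. -/
def wall {r : ℕ} (e : Fin r → ℤ) : Set (Fin r → ℝ) := { v | pairR v e = 0 }

/-- `M_+ := { i : D_i · e > 0 }`. -/
def Mplus {r m : ℕ} (D : Fin m → Fin r → ℤ) (e : Fin r → ℤ) : Finset (Fin m) :=
  Finset.univ.filter fun i => 0 < pairZ (D i) e

/-- `M_- := { i : D_i · e < 0 }`. -/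
def Mminus {r m : ℕ} (D : Fin m → Fin r → ℤ) (e : Fin r → ℤ) : Finset (Fin m) :=
  Finset.univ.filter fun i => pairZ (D i) e < 0

/-- `M_0 := { i : D_i · e = 0 }`. -/
def Mzero {r m : ℕ} (D : Fin m → Fin r → ℤ) (e : Fin r → ℤ) : Finset (Fin m) :=
  Finset.univ.filter fun i => pairZ (D i) e = 0

/-- The wall-crossing setup of §5.1 of the paper: two stability conditions
`ω_+`, `ω_-` satisfying Assumption (⋆) whose chambers are separated by the
wall `W = e^⊥`, satisfying the crepancy condition `Σ_i D_i · e = 0`, together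
with a stability condition `ω₀` in the relative interior of the common facet
`W ∩ closure C_+ = W ∩ closure C_-` (which spans the hyperplane `W`). -/
structure WallCrossingSetup (r m : ℕ) where
  D : Fin m → Fin r → ℤ
  ωp : Fin r → ℝ
  ωm : Fin r → ℝ
  ω₀ : Fin r → ℝ
  e : Fin r → ℤ
  hr : 0 < r
  hrm : r ≤ m
  starP : AssumptionStar D ωp
  starM : AssumptionStar D ωm
  he : e ≠ 0
  posP : ∀ v ∈ extAmpleCone D ωp, 0 < pairR v e
  negM : ∀ v ∈ extAmpleCone D ωm, pairR v e < 0
  crepant : (∑ i, pairZ (D i) e) = 0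
  wallEq : wall e ∩ closure (extAmpleCone D ωp)
      = wall e ∩ closure (extAmpleCone D ωm)
  wallSpanEq : Submodule.span ℝ (wall e ∩ closure (extAmpleCone D ωp))
      = Submodule.span ℝ (wall e)
  interior₀ : ω₀ ∈ intrinsicInterior ℝ (wall e ∩ closure (extAmpleCone D ωp))

/-- `𝒜_0^thin := { I ∈ 𝒜_0 : I ⊆ M_0 }`. -/
def thinA {r m : ℕ} (D : Fin m → Fin r → ℤ) (ω₀ : Fin r → ℝ) (e : Fin r → ℤ) :
    Set (Finset (Fin m)) :=
  { I | I ∈ anticones D ω₀ ∧ I ⊆ Mzero D e }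

/-- `𝒜_0^thick := { I ∈ 𝒜_0 : I ∩ M_+ ≠ ∅ and I ∩ M_- ≠ ∅ }`. -/
def thickA {r m : ℕ} (D : Fin m → Fin r → ℤ) (ω₀ : Fin r → ℝ) (e : Fin r → ℤ) :
    Set (Finset (Fin m)) :=
  { I | I ∈ anticones D ω₀ ∧ (I ∩ Mplus D e).Nonempty ∧ (I ∩ Mminus D e).Nonempty }

/-- `l_i := max(−D_i·e, 0)`. -/
def lexp {r m : ℕ} (D : Fin m → Fin r → ℤ) (e : Fin r → ℤ) (i : Fin m) : ℕ :=
  (max (-(pairZ (D i) e)) 0).toNat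

/-- The map `F(z_1,…,z_m,z_{m+1}) := (z_1 z_{m+1}^{l_1}, …, z_m z_{m+1}^{l_m})`
inducing the toric blow-down `f_+ : X̃ → X_+`. -/
def blowdownMap {r m : ℕ} (D : Fin m → Fin r → ℤ) (e : Fin r → ℤ)
    (z : Fin (m + 1) → ℂ) : Fin m → ℂ :=
  fun i => z (Fin.castSucc i) * z (Fin.last m) ^ lexp D e i

/-- The anticone set `𝒜̃` of the common toric blow-up `X̃`. -/
def AtildeSet {r m : ℕ} (D : Fin m → Fin r → ℤ) (ω₀ : Fin r → ℝ)
    (e : Fin r → ℤ) : Set (Finset (Fin (m + 1))) :=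
  { J | ∃ I ∈ thickA D ω₀ e, J = insert (Fin.last m) (I.image Fin.castSucc) }
    ∪ { J | ∃ I ∈ thickA D ω₀ e,
        I ∩ Mzero D e ∈ thinA D ω₀ e ∧ J = I.image Fin.castSucc }

/-- `Ũ := ⋃_{Ĩ ∈ 𝒜̃} { z ∈ ℂ^{m+1} : z_i ≠ 0 for i ∈ Ĩ }`. -/
def UtildeSet {r m : ℕ} (D : Fin m → Fin r → ℤ) (ω₀ : Fin r → ℝ)
    (e : Fin r → ℤ) : Set (Fin (m + 1) → ℂ) :=
  ⋃ J ∈ AtildeSet D ω₀ e, { z : Fin (m + 1) → ℂ | ∀ i ∈ J, z i ≠ 0 }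

section AuxSection

variable {r m : ℕ} {Dv : Fin m → Fin r → ℝ}

/-- The linear map `c ↦ ∑ i ∈ K, c i • Dv i`. -/
def coneMap (Dv : Fin m → Fin r → ℝ) (K : Finset (Fin m)) :
    (Fin m → ℝ) →ₗ[ℝ] (Fin r → ℝ) where
  toFun := fun c => ∑ i ∈ K, c i • Dv i
  map_add' := by
    intro u v
    simp [add_smul, Finset.sum_add_distrib]
  map_smul' := by
    intro c u
    simp [Finset.smul_sum, smul_smul]

lemma coneMap_apply (K : Finset (Fin m)) (c : Fin m → ℝ) :
    coneMap Dv K c = ∑ i ∈ K, c i • Dv i := rfl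

lemma coneMap_range (K : Finset (Fin m))
    (hsp : Submodule.span ℝ (Dv '' (K : Set (Fin m))) = ⊤) :
    LinearMap.range (coneMap Dv K) = ⊤ := by
  rw [eq_top_iff, ← hsp, Submodule.span_le]
  rintro w ⟨i, hi, rfl⟩
  refine ⟨fun k => if k = i then 1 else 0, ?_⟩
  rw [coneMap_apply]
  have : ∀ k ∈ K, (if k = i then (1:ℝ) else 0) • Dv k
      = if k = i then Dv i else 0 := by
    intro k _
    by_cases h : k = i <;> simp [h]
  rw [Finset.sum_congr rfl this, Finset.sum_ite_eq' K i (fun _ => Dv i),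
    if_pos (Finset.mem_coe.mp hi)]

lemma rep_eq_of_indep {K : Finset (Fin m)}
    (h : LinearIndependent ℝ (fun i : ↥K => Dv i)) {a b : Fin m → ℝ}
    (hab : ∑ i ∈ K, a i • Dv i = ∑ i ∈ K, b i • Dv i) : ∀ i ∈ K, a i = b i := by
  have h0 : ∑ i : ↥K, (a i.1 - b i.1) • Dv i.1 = 0 := by
    rw [Finset.sum_coe_sort K (fun i => (a i - b i) • Dv i)]
    simp only [sub_smul, Finset.sum_sub_distrib, hab, sub_self]
  intro i hi
  have := Fintype.linearIndependent_iff.mp h (fun i => a i.1 - b i.1) h0 ⟨i, hi⟩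
  linarith [this]

lemma angle_reduce {ω : Fin r → ℝ} :
    ∀ K : Finset (Fin m), ω ∈ angleCone Dv K →
      ∃ K', K' ⊆ K ∧ LinearIndependent ℝ (fun i : ↥K' => Dv i) ∧
        ω ∈ angleCone Dv K' := by
  intro K
  induction K using Finset.strongInductionOn with
  | _ K ih =>
    intro hK
    by_cases hind : LinearIndependent ℝ (fun i : ↥K => Dv i)
    · exact ⟨K, subset_rfl, hind, hK⟩
    obtain ⟨g, hg0, i₀, hgi₀⟩ := Fintype.not_linearIndependent_iff.mp hind
    obtain ⟨a, ha, haeq⟩ := hK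
    have hlamsum : ∀ lam : Fin m → ℝ, (∀ (i : ↥K), lam i.1 = g i) →
        ∑ i ∈ K, lam i • Dv i = 0 := by
      intro lam hl
      rw [← Finset.sum_coe_sort K (fun i => lam i • Dv i)]
      rw [Finset.sum_congr rfl (fun i _ => by rw [hl i])]
      exact hg0
    have hpick : ∃ l : Fin m → ℝ, (∑ i ∈ K, l i • Dv i = 0) ∧ ∃ i ∈ K, 0 < l i := by
      set l₀ : Fin m → ℝ := fun i => if h : i ∈ K then g ⟨i, h⟩ else 0 with hl₀
      have hl₀val : ∀ (i : ↥K), l₀ i.1 = g i := by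
        intro i
        simp only [hl₀, dif_pos i.2]
      have hl₀sum : ∑ i ∈ K, l₀ i • Dv i = 0 := by
        rw [← Finset.sum_coe_sort K (fun i => l₀ i • Dv i),
          Finset.sum_congr rfl (fun i _ => by rw [hl₀val i])]
        exact hg0
      rcases lt_or_gt_of_ne hgi₀ with hneg | hpos
      · refine ⟨-l₀, by simp [hl₀sum], i₀.1, i₀.2, ?_⟩
        have := hl₀val i₀
        simp only [Pi.neg_apply, this]
        linarith
      · exact ⟨l₀, hl₀sum, i₀.1, i₀.2, by rw [hl₀val i₀]; exact hpos⟩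
    obtain ⟨l, hl0, i₂, hi₂K, hi₂⟩ := hpick
    set P := K.filter (fun i => 0 < l i) with hP
    have hPne : P.Nonempty := ⟨i₂, Finset.mem_filter.mpr ⟨hi₂K, hi₂⟩⟩
    obtain ⟨i₁, hi₁P, hmin⟩ := Finset.exists_min_image P (fun i => a i / l i) hPne
    obtain ⟨hi₁K, hi₁pos⟩ := Finset.mem_filter.mp hi₁P
    set t := a i₁ / l i₁ with ht
    have htpos : 0 < t := div_pos (ha _ hi₁K) hi₁pos
    set a' : Fin m → ℝ := fun i => a i - t * l i with ha'
    have ha'nonneg : ∀ i ∈ K, 0 ≤ a' i := by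
      intro i hi
      by_cases hl : 0 < l i
      · have h1 := hmin i (Finset.mem_filter.mpr ⟨hi, hl⟩)
        have h2 : t * l i ≤ a i := (le_div_iff₀ hl).mp h1
        simp only [ha']; linarith
      · push_neg at hl
        have : t * l i ≤ 0 := mul_nonpos_of_nonneg_of_nonpos htpos.le hl
        have := ha i hi
        simp only [ha']; linarith
    have ha'i₁ : a' i₁ = 0 := by
      simp only [ha', ht]
      field_simp
      ring
    have ha'sum : ∑ i ∈ K, a' i • Dv i = ω := by
      have : ∀ i ∈ K, a' i • Dv i = a i • Dv i - t • (l i • Dv i) := by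
        intro i _
        simp only [ha', sub_smul, smul_smul]
      rw [Finset.sum_congr rfl this, Finset.sum_sub_distrib, ← Finset.smul_sum,
        hl0, smul_zero, sub_zero, ← haeq]
    set K'' := K.filter (fun i => 0 < a' i) with hK''
    have hssub : K'' ⊂ K := by
      refine Finset.ssubset_iff_of_subset (Finset.filter_subset _ _) |>.mpr ?_
      exact ⟨i₁, hi₁K, by simp [hK'', ha'i₁]⟩
    have hωK'' : ω ∈ angleCone Dv K'' := by
      refine ⟨a', fun i hi => (Finset.mem_filter.mp hi).2, ?_⟩
      rw [← ha'sum]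
      symm
      rw [hK'']
      refine Finset.sum_filter_of_ne ?_
      intro i hi hne
      rcases (ha'nonneg i hi).lt_or_eq with h | h
      · exact h
      · exact absurd (by rw [← h, zero_smul]) hne
    obtain ⟨K', h1, h2, h3⟩ := ih K'' hssub hωK''
    exact ⟨K', h1.trans (Finset.filter_subset _ _), h2, h3⟩

lemma angle_insert {ω : Fin r → ℝ} {K J : Finset (Fin m)}
    (hsp : Submodule.span ℝ (Dv '' (K : Set (Fin m))) = ⊤)
    (hKJ : K ⊆ J) (hωJ : ω ∈ angleCone Dv J) (j : Fin m) :
    ω ∈ angleCone Dv (insert j J) := by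
  by_cases hj : j ∈ J
  · rwa [Finset.insert_eq_self.mpr hj]
  obtain ⟨a, ha, haeq⟩ := hωJ
  obtain ⟨β, hβ⟩ : ∃ β, coneMap Dv K β = Dv j := by
    have := coneMap_range (Dv := Dv) K hsp
    exact LinearMap.range_eq_top.mp this (Dv j)
  set s : Finset ℝ := insert 1 (K.image (fun i => a i / (|β i| + 1))) with hs
  have hsne : s.Nonempty := Finset.insert_nonempty _ _
  set ε := s.min' hsne with hε
  have hεpos : 0 < ε := by
    rw [hε, Finset.lt_min'_iff]
    intro y hy
    rw [hs, Finset.mem_insert] at hy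
    rcases hy with rfl | hy
    · norm_num
    · obtain ⟨i, hi, rfl⟩ := Finset.mem_image.mp hy
      exact div_pos (ha i (hKJ hi)) (by positivity)
  have hεle : ∀ i ∈ K, ε * |β i| < a i := by
    intro i hi
    have h1 : ε ≤ a i / (|β i| + 1) :=
      Finset.min'_le _ _ (Finset.mem_insert_of_mem (Finset.mem_image_of_mem _ hi))
    have h2 : a i / (|β i| + 1) * |β i| < a i := by
      rw [div_mul_eq_mul_div, div_lt_iff₀ (by positivity)]
      nlinarith [ha i (hKJ hi), abs_nonneg (β i)]
    calc ε * |β i| ≤ a i / (|β i| + 1) * |β i| :=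
          mul_le_mul_of_nonneg_right h1 (abs_nonneg _)
      _ < a i := h2
  set β' : Fin m → ℝ := fun i => if i ∈ K then β i else 0 with hβ'
  set a' : Fin m → ℝ := fun i => if i = j then ε else a i - ε * β' i with ha'
  refine ⟨a', ?_, ?_⟩
  · intro i hi
    rcases Finset.mem_insert.mp hi with rfl | hiJ
    · simp [ha', hεpos]
    · have hij : i ≠ j := by rintro rfl; exact hj hiJ
      simp only [ha', if_neg hij, hβ']
      by_cases hiK : i ∈ K
      · simp only [if_pos hiK]
        have h1 : ε * β i ≤ ε * |β i| :=
          mul_le_mul_of_nonneg_left (le_abs_self _) hεpos.le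
        linarith [hεle i hiK]
      · simp only [if_neg hiK, mul_zero, sub_zero]
        exact ha i hiJ
  · rw [Finset.sum_insert hj]
    have hstep : ∀ i ∈ J, a' i • Dv i = a i • Dv i - ε • (β' i • Dv i) := by
      intro i hi
      have hij : i ≠ j := by rintro rfl; exact hj hi
      simp only [ha', if_neg hij, sub_smul, smul_smul]
    rw [Finset.sum_congr rfl hstep, Finset.sum_sub_distrib, ← Finset.smul_sum]
    have hKsum : ∑ i ∈ J, β' i • Dv i = Dv j := by
      have h1 : ∀ i ∈ J, β' i • Dv i = if i ∈ K then β i • Dv i else 0 := by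
        intro i _
        by_cases h : i ∈ K <;> simp [hβ', h]
      rw [Finset.sum_congr rfl h1, Finset.sum_ite_mem,
        Finset.inter_eq_right.mpr hKJ, ← coneMap_apply, hβ]
    rw [hKsum, ← haeq]
    have : a' j = ε := by simp [ha']
    rw [this]
    module

lemma angle_upward {ω : Fin r → ℝ} {K J : Finset (Fin m)}
    (hsp : Submodule.span ℝ (Dv '' (K : Set (Fin m))) = ⊤)
    (hK : ω ∈ angleCone Dv K) (hKJ : K ⊆ J) : ω ∈ angleCone Dv J := by
  have hmain : ∀ T : Finset (Fin m), ω ∈ angleCone Dv (K ∪ T) := by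
    intro T
    induction T using Finset.induction_on with
    | empty => rwa [Finset.union_empty]
    | insert hnm ih =>
      rename_i t T'
      rw [Finset.union_insert]
      exact angle_insert hsp Finset.subset_union_left T' hnm
  have := hmain J
  rwa [Finset.union_eq_right.mpr hKJ] at this

lemma range_restrict_finset (Dv : Fin m → Fin r → ℝ) (K : Finset (Fin m)) :
    Set.range (fun i : ↥K => Dv ↑i) = Dv '' (K : Set (Fin m)) := by
  ext w
  constructor
  · rintro ⟨i, rfl⟩
    exact ⟨i.1, Finset.mem_coe.mpr i.2, rfl⟩
  · rintro ⟨i, hi, rfl⟩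
    exact ⟨⟨i, Finset.mem_coe.mp hi⟩, rfl⟩

/-- Coefficient witness for a membership `ω ∈ angleCone Dv K`. -/
def repc (Dv : Fin m → Fin r → ℝ) (ω : Fin r → ℝ) (K : Finset (Fin m)) :
    Fin m → ℝ :=
  if h : ω ∈ angleCone Dv K then h.choose else fun _ => 0

lemma repc_spec {Dv : Fin m → Fin r → ℝ} {ω : Fin r → ℝ} {K : Finset (Fin m)}
    (h : ω ∈ angleCone Dv K) :
    (∀ i ∈ K, 0 < repc Dv ω K i) ∧ ω = ∑ i ∈ K, repc Dv ω K i • Dv i := by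
  unfold repc
  rw [dif_pos h]
  exact h.choose_spec

/-- The cost function of the auxiliary linear program: `1` outside `J`, `0` on `J`. -/
def costJ {m : ℕ} (J : Finset (Fin m)) : Fin m → ℝ := fun i => if i ∈ J then 0 else 1

lemma costJ_of_mem {J : Finset (Fin m)} {i : Fin m} (h : i ∈ J) : costJ J i = 0 :=
  if_pos h

lemma costJ_of_not_mem {J : Finset (Fin m)} {i : Fin m} (h : i ∉ J) : costJ J i = 1 :=
  if_neg h

lemma costJ_nonneg (J : Finset (Fin m)) (i : Fin m) : 0 ≤ costJ J i := by
  unfold costJ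
  split <;> norm_num

/-- Pivot coefficients. -/
def pivotC {m : ℕ} (c vv : Fin m → ℝ) (i₀ : Fin m) (t : ℝ) : Fin m → ℝ :=
  fun i => if i = i₀ then t else c i - t * vv i

lemma pivotC_self {c vv : Fin m → ℝ} {i₀ : Fin m} {t : ℝ} : pivotC c vv i₀ t i₀ = t :=
  if_pos rfl

lemma pivotC_ne {c vv : Fin m → ℝ} {i₀ i : Fin m} {t : ℝ} (h : i ≠ i₀) :
    pivotC c vv i₀ t i = c i - t * vv i := if_neg h

lemma master {ω x : Fin r → ℝ}
    (hspan : ∀ I : Finset (Fin m), ω ∈ angleCone Dv I →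
      Submodule.span ℝ (Dv '' (I : Set (Fin m))) = ⊤)
    (hx : ∀ K : Finset (Fin m), ω ∈ angleCone Dv K → x ∈ angleCone Dv K)
    (huniv : ω ∈ angleCone Dv Finset.univ)
    {J : Finset (Fin m)} (hJ : x ∈ angleCone Dv J) : ω ∈ angleCone Dv J := by
  classical
  set Bf : Finset (Finset (Fin m)) := Finset.univ.filter
    (fun K => (LinearIndependent ℝ (fun i : ↥K => Dv i)) ∧ ω ∈ angleCone Dv K)
    with hBf
  have hBfmem : ∀ K : Finset (Fin m),
      K ∈ Bf ↔ (LinearIndependent ℝ (fun i : ↥K => Dv i)) ∧ ω ∈ angleCone Dv K := by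
    intro K
    rw [hBf, Finset.mem_filter]
    simp only [Finset.mem_univ, true_and]
  have hBfne : Bf.Nonempty := by
    obtain ⟨K₀, _, h2, h3⟩ := angle_reduce Finset.univ huniv
    exact ⟨K₀, (hBfmem K₀).mpr ⟨h2, h3⟩⟩
  obtain ⟨Ks, hKsBf, hKmin⟩ := Finset.exists_min_image Bf
    (fun K => ∑ i ∈ K, repc Dv ω K i * costJ J i) hBfne
  obtain ⟨hKsind, hKsω⟩ := (hBfmem Ks).mp hKsBf
  have hspanKs := hspan Ks hKsω
  by_cases hKsJ : Ks ⊆ J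
  · exact angle_upward hspanKs hKsω hKsJ
  exfalso
  obtain ⟨i₂, hi₂⟩ := Finset.sdiff_nonempty.mpr hKsJ
  obtain ⟨hcpos, hceq⟩ := repc_spec hKsω
  have hrk : Module.finrank ℝ (Fin r → ℝ) = r := by
    rw [Module.finrank_fintype_fun_eq_card, Fintype.card_fin]
  have hle : ⊤ ≤ Submodule.span ℝ (Set.range (fun i : ↥Ks => Dv i)) := by
    rw [range_restrict_finset, hspanKs]
  set B : Module.Basis ↥Ks ℝ (Fin r → ℝ) := Module.Basis.mk hKsind hle with hB
  set φ : (Fin r → ℝ) →ₗ[ℝ] ℝ := B.constr ℝ (fun i : ↥Ks => costJ J i.1) with hφ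
  have hφD : ∀ i (h : i ∈ Ks), φ (Dv i) = costJ J i := by
    intro i h
    have h1 : Dv i = B ⟨i, h⟩ := by rw [hB, Module.Basis.mk_apply]
    rw [h1, hφ, Module.Basis.constr_basis]
  have hobjKs : 0 ≤ ∑ i ∈ Ks, repc Dv ω Ks i * costJ J i :=
    Finset.sum_nonneg fun i hi => mul_nonneg (hcpos i hi).le (costJ_nonneg J i)
  have hkey : ∀ i₀, φ (Dv i₀) ≤ costJ J i₀ := by
    intro i₀
    by_contra hgt
    push_neg at hgt
    have hi₀Ks : i₀ ∉ Ks := by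
      intro h
      rw [hφD i₀ h] at hgt
      exact lt_irrefl _ hgt
    set vv : Fin m → ℝ := fun i => if h : i ∈ Ks then B.repr (Dv i₀) ⟨i, h⟩ else 0
      with hvv
    have hvvsum : ∑ i ∈ Ks, vv i • Dv i = Dv i₀ := by
      rw [← Finset.sum_coe_sort Ks (fun i => vv i • Dv i)]
      have h1 : ∀ i : ↥Ks, vv i.1 • Dv i.1 = B.repr (Dv i₀) i • B i := by
        intro i
        have h2 : vv i.1 = B.repr (Dv i₀) i := dif_pos i.2
        rw [h2, hB, Module.Basis.mk_apply]
      rw [Finset.sum_congr rfl (fun i _ => h1 i)]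
      exact B.sum_repr (Dv i₀)
    have hφval : φ (Dv i₀) = ∑ i ∈ Ks, vv i * costJ J i := by
      rw [← hvvsum, map_sum]
      refine Finset.sum_congr rfl fun i hi => ?_
      rw [map_smul, hφD i hi, smul_eq_mul]
    have hsum_insert : ∀ t : ℝ,
        ∑ i ∈ insert i₀ Ks, pivotC (repc Dv ω Ks) vv i₀ t i • Dv i = ω := by
      intro t
      rw [Finset.sum_insert hi₀Ks, pivotC_self]
      have h2 : ∀ i ∈ Ks, pivotC (repc Dv ω Ks) vv i₀ t i • Dv i
          = repc Dv ω Ks i • Dv i - t • (vv i • Dv i) := by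
        intro i hi
        have hne : i ≠ i₀ := fun h => hi₀Ks (h ▸ hi)
        rw [pivotC_ne hne, sub_smul, smul_smul]
      rw [Finset.sum_congr rfl h2, Finset.sum_sub_distrib, ← Finset.smul_sum, hvvsum,
        ← hceq]
      module
    have hcost_insert : ∀ t : ℝ,
        ∑ i ∈ insert i₀ Ks, pivotC (repc Dv ω Ks) vv i₀ t i * costJ J i
          = (∑ i ∈ Ks, repc Dv ω Ks i * costJ J i) - t * (φ (Dv i₀) - costJ J i₀) := by
      intro t
      rw [Finset.sum_insert hi₀Ks, pivotC_self]
      have h2 : ∀ i ∈ Ks, pivotC (repc Dv ω Ks) vv i₀ t i * costJ J i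
          = repc Dv ω Ks i * costJ J i - t * (vv i * costJ J i) := by
        intro i hi
        have hne : i ≠ i₀ := fun h => hi₀Ks (h ▸ hi)
        rw [pivotC_ne hne]
        ring
      rw [Finset.sum_congr rfl h2, Finset.sum_sub_distrib, ← Finset.mul_sum, ← hφval]
      ring
    by_cases hPne : (Ks.filter (fun i => 0 < vv i)).Nonempty
    · -- ratio-test pivot: strictly better basic solution, contradiction
      obtain ⟨i₁, hi₁P, hmin⟩ :=
        Finset.exists_min_image _ (fun i => repc Dv ω Ks i / vv i) hPne
      obtain ⟨hi₁Ks, hi₁pos⟩ := Finset.mem_filter.mp hi₁P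
      set t := repc Dv ω Ks i₁ / vv i₁ with htdef
      have htpos : 0 < t := div_pos (hcpos _ hi₁Ks) hi₁pos
      set c' : Fin m → ℝ := pivotC (repc Dv ω Ks) vv i₀ t with hc'
      have hc'nonneg : ∀ i ∈ insert i₀ Ks, 0 ≤ c' i := by
        intro i hi
        rcases Finset.mem_insert.mp hi with rfl | hiKs
        · rw [hc', pivotC_self]
          exact htpos.le
        · have hne : i ≠ i₀ := fun h => hi₀Ks (h ▸ hiKs)
          rw [hc', pivotC_ne hne]
          by_cases hvi : 0 < vv i
          · have h1 := hmin i (Finset.mem_filter.mpr ⟨hiKs, hvi⟩)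
            have h2 : t * vv i ≤ repc Dv ω Ks i := (le_div_iff₀ hvi).mp h1
            linarith
          · push_neg at hvi
            have h3 : t * vv i ≤ 0 := mul_nonpos_of_nonneg_of_nonpos htpos.le hvi
            linarith [hcpos i hiKs]
      have hc'i₁ : c' i₁ = 0 := by
        have hne : i₁ ≠ i₀ := fun h => hi₀Ks (h ▸ hi₁Ks)
        rw [hc', pivotC_ne hne]
        have ht2 : t * vv i₁ = repc Dv ω Ks i₁ := by
          rw [htdef]
          exact div_mul_cancel₀ _ hi₁pos.ne'
        linarith
      set K'' := (insert i₀ Ks).filter (fun i => 0 < c' i) with hK''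
      have hK''sub : K'' ⊆ insert i₀ Ks := by
        rw [hK'']
        exact Finset.filter_subset _ _
      have hc'zero : ∀ i ∈ insert i₀ Ks, i ∉ K'' → c' i = 0 := by
        intro i hi hni
        rcases (hc'nonneg i hi).lt_or_eq with h | h
        · exact absurd ((Finset.mem_filter).mpr ⟨hi, h⟩) (by rw [← hK''] at *; exact hni)
        · exact h.symm
      have hsumK'' : ∑ i ∈ K'', c' i • Dv i = ω := by
        have h0 : ∑ i ∈ K'', c' i • Dv i = ∑ i ∈ insert i₀ Ks, c' i • Dv i := by
          refine Finset.sum_subset hK''sub ?_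
          intro i hi hni
          rw [hc'zero i hi hni, zero_smul]
        rw [h0, hc']
        exact hsum_insert t
      have hωK'' : ω ∈ angleCone Dv K'' :=
        ⟨c', fun i hi => (Finset.mem_filter.mp hi).2, hsumK''.symm⟩
      have hsp'' := hspan K'' hωK''
      have hK''card : K''.card = r := by
        have h1 : K''.card ≤ ((insert i₀ Ks).erase i₁).card := by
          refine Finset.card_le_card ?_
          intro i hi
          obtain ⟨h1, h2⟩ := Finset.mem_filter.mp hi
          refine Finset.mem_erase.mpr ⟨?_, h1⟩
          rintro rfl
          rw [hc'i₁] at h2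
          exact lt_irrefl _ h2
        have h2 : ((insert i₀ Ks).erase i₁).card = Ks.card := by
          rw [Finset.card_erase_of_mem (Finset.mem_insert_of_mem hi₁Ks),
            Finset.card_insert_of_notMem hi₀Ks]
          omega
        have hKscard : Ks.card = r := by
          have h6 := Module.finrank_eq_card_basis B
          rw [hrk, Fintype.card_coe] at h6
          omega
        have h3 : Submodule.span ℝ ((K''.image Dv : Finset (Fin r → ℝ)) :
            Set (Fin r → ℝ)) = ⊤ := by
          rw [Finset.coe_image]
          exact hsp''
        have h4 := finrank_span_finset_le_card (R := ℝ) (K''.image Dv)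
        rw [Set.finrank, h3, finrank_top, hrk] at h4
        have h5 : (K''.image Dv).card ≤ K''.card := Finset.card_image_le
        omega
      have hK''ind : LinearIndependent ℝ (fun i : ↥K'' => Dv i) := by
        apply linearIndependent_of_top_le_span_of_card_eq_finrank
        · rw [range_restrict_finset, hsp'']
        · rw [Fintype.card_coe, hK''card, hrk]
      have hK''Bf : K'' ∈ Bf := (hBfmem K'').mpr ⟨hK''ind, hωK''⟩
      obtain ⟨hc''pos, hc''eq⟩ := repc_spec hωK''
      have heqc' : ∀ i ∈ K'', repc Dv ω K'' i = c' i :=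
        rep_eq_of_indep hK''ind (by rw [← hc''eq, hsumK''])
      have hobjK'' : ∑ i ∈ K'', repc Dv ω K'' i * costJ J i
          = (∑ i ∈ Ks, repc Dv ω Ks i * costJ J i) - t * (φ (Dv i₀) - costJ J i₀) := by
        rw [Finset.sum_congr rfl (fun i hi => by rw [heqc' i hi])]
        have h0 : ∑ i ∈ K'', c' i * costJ J i
            = ∑ i ∈ insert i₀ Ks, c' i * costJ J i := by
          refine Finset.sum_subset hK''sub ?_
          intro i hi hni
          rw [hc'zero i hi hni, zero_mul]
        rw [h0, hc']
        exact hcost_insert t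
      have hlt : ∑ i ∈ K'', repc Dv ω K'' i * costJ J i
          < ∑ i ∈ Ks, repc Dv ω Ks i * costJ J i := by
        rw [hobjK'']
        have : 0 < t * (φ (Dv i₀) - costJ J i₀) :=
          mul_pos htpos (sub_pos.mpr hgt)
        linarith
      have := hKmin K'' hK''Bf
      linarith
    · -- unbounded improving ray: contradiction with nonnegativity
      have hvvle : ∀ i ∈ Ks, vv i ≤ 0 := by
        intro i hi
        by_contra h
        push_neg at h
        exact hPne ⟨i, Finset.mem_filter.mpr ⟨hi, h⟩⟩
      have hd : 0 < φ (Dv i₀) - costJ J i₀ := sub_pos.mpr hgt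
      set t := ((∑ i ∈ Ks, repc Dv ω Ks i * costJ J i) + 1) / (φ (Dv i₀) - costJ J i₀)
        with htdef
      have htpos : 0 < t := div_pos (by linarith) hd
      have hnn : 0 ≤ ∑ i ∈ insert i₀ Ks, pivotC (repc Dv ω Ks) vv i₀ t i * costJ J i := by
        refine Finset.sum_nonneg fun i hi => ?_
        refine mul_nonneg ?_ (costJ_nonneg J i)
        rcases Finset.mem_insert.mp hi with rfl | hiKs
        · rw [pivotC_self]
          exact htpos.le
        · have hne : i ≠ i₀ := fun h => hi₀Ks (h ▸ hiKs)
          rw [pivotC_ne hne]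
          have h3 : t * vv i ≤ 0 :=
            mul_nonpos_of_nonneg_of_nonpos htpos.le (hvvle i hiKs)
          linarith [hcpos i hiKs]
      rw [hcost_insert t] at hnn
      have ht2 : t * (φ (Dv i₀) - costJ J i₀)
          = (∑ i ∈ Ks, repc Dv ω Ks i * costJ J i) + 1 := by
        rw [htdef]
        exact div_mul_cancel₀ _ hd.ne'
      rw [ht2] at hnn
      linarith
  -- final contradiction using x
  obtain ⟨d, hd, hdeq⟩ := hJ
  have hφx1 : φ x ≤ 0 := by
    rw [hdeq, map_sum]
    refine Finset.sum_nonpos fun i hi => ?_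
    rw [map_smul, smul_eq_mul]
    have h1 := hkey i
    rw [costJ_of_mem hi] at h1
    exact mul_nonpos_of_nonneg_of_nonpos (hd i hi).le h1
  obtain ⟨q, hq, hqeq⟩ := hx Ks hKsω
  have hφx2 : 0 < φ x := by
    rw [hqeq, map_sum]
    have h1 : ∀ i ∈ Ks, φ (q i • Dv i) = q i * costJ J i := by
      intro i hi
      rw [map_smul, smul_eq_mul, hφD i hi]
    rw [Finset.sum_congr rfl h1]
    refine Finset.sum_pos' (fun i hi => mul_nonneg (hq i hi).le (costJ_nonneg J i)) ?_
    refine ⟨i₂, (Finset.mem_sdiff.mp hi₂).1, ?_⟩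
    rw [costJ_of_not_mem (Finset.mem_sdiff.mp hi₂).2]
    have := hq i₂ (Finset.mem_sdiff.mp hi₂).1
    linarith
  linarith


/-! ### Topological lemmas -/

lemma pairR_zero {e : Fin r → ℤ} : pairR (0 : Fin r → ℝ) e = 0 := by
  simp [pairR]

lemma pairR_add {v w : Fin r → ℝ} {e : Fin r → ℤ} :
    pairR (v + w) e = pairR v e + pairR w e := by
  simp [pairR, add_mul, Finset.sum_add_distrib]

lemma pairR_sub {v w : Fin r → ℝ} {e : Fin r → ℤ} :
    pairR (v - w) e = pairR v e - pairR w e := by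
  simp [pairR, sub_mul, Finset.sum_sub_distrib]

lemma pairR_smul {c : ℝ} {v : Fin r → ℝ} {e : Fin r → ℤ} :
    pairR (c • v) e = c * pairR v e := by
  simp [pairR, Finset.mul_sum, mul_assoc]

lemma pairR_DR {D : Fin m → Fin r → ℤ} {e : Fin r → ℤ} {i : Fin m} :
    pairR (DR D i) e = (pairZ (D i) e : ℝ) := by
  simp [pairR, pairZ, DR]

lemma isOpen_angleCone {I : Finset (Fin m)}
    (hsp : Submodule.span ℝ (Dv '' (I : Set (Fin m))) = ⊤) :
    IsOpen (angleCone Dv I) := by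
  have hL : angleCone Dv I = (coneMap Dv I) '' {c | ∀ i ∈ I, 0 < c i} := by
    ext w
    constructor
    · rintro ⟨a, ha, rfl⟩
      exact ⟨a, ha, rfl⟩
    · rintro ⟨c, hc, rfl⟩
      exact ⟨c, hc, rfl⟩
  rw [hL]
  have hsurj : Function.Surjective (coneMap Dv I) :=
    LinearMap.range_eq_top.mp (coneMap_range I hsp)
  have hcont := LinearMap.toContinuousLinearMap (coneMap Dv I)
  have hopenmap : IsOpenMap (coneMap Dv I) := by
    have h1 := ContinuousLinearMap.isOpenMap
      (LinearMap.toContinuousLinearMap (coneMap Dv I))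
      (by rwa [LinearMap.coe_toContinuousLinearMap'])
    rwa [LinearMap.coe_toContinuousLinearMap'] at h1
  refine hopenmap _ ?_
  have h2 : {c : Fin m → ℝ | ∀ i ∈ I, 0 < c i}
      = ⋂ i ∈ (I : Set (Fin m)), {c : Fin m → ℝ | 0 < c i} := by
    ext c
    simp
  rw [h2]
  exact Set.Finite.isOpen_biInter (Set.toFinite _)
    (fun i _ => isOpen_lt continuous_const (continuous_apply i))

lemma convex_angleCone (I : Finset (Fin m)) : Convex ℝ (angleCone Dv I) := by
  rintro w1 ⟨a1, ha1, rfl⟩ w2 ⟨a2, ha2, rfl⟩ s t hs ht hst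
  refine ⟨fun i => s * a1 i + t * a2 i, ?_, ?_⟩
  · intro i hi
    show 0 < s * a1 i + t * a2 i
    rcases hs.lt_or_eq with hs' | hs'
    · have h1 := mul_pos hs' (ha1 i hi)
      have h2 := mul_nonneg ht (ha2 i hi).le
      linarith
    · have hts : t = 1 := by linarith
      rw [← hs', hts]
      have := ha2 i hi
      linarith
  · rw [Finset.smul_sum, Finset.smul_sum, ← Finset.sum_add_distrib]
    refine Finset.sum_congr rfl fun i _ => ?_
    rw [smul_smul, smul_smul, ← add_smul]

lemma smul_mem_angleCone {I : Finset (Fin m)} {w : Fin r → ℝ} {t : ℝ}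
    (h : w ∈ angleCone Dv I) (ht : 0 < t) : t • w ∈ angleCone Dv I := by
  obtain ⟨a, ha, rfl⟩ := h
  refine ⟨fun i => t * a i, fun i hi => mul_pos ht (ha i hi), ?_⟩
  rw [Finset.smul_sum]
  refine Finset.sum_congr rfl fun i _ => ?_
  show t • a i • Dv i = (t * a i) • Dv i
  rw [smul_smul]

end AuxSection

section SetupLemmas

variable {r m : ℕ} (W : WallCrossingSetup r m)

lemma mem_extAmple_iff {v : Fin r → ℝ} {D : Fin m → Fin r → ℤ} {ω : Fin r → ℝ} :
    v ∈ extAmpleCone D ω ↔ ∀ I ∈ anticones D ω, v ∈ angleCone (DR D) I :=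
  Set.mem_iInter₂

lemma ωp_mem_extAmple : W.ωp ∈ extAmpleCone W.D W.ωp :=
  mem_extAmple_iff.mpr fun _ hI => hI

lemma isOpen_extAmple : IsOpen (extAmpleCone W.D W.ωp) :=
  Set.Finite.isOpen_biInter (Set.toFinite _)
    (fun I hI => isOpen_angleCone (W.starP.2 I hI))

lemma convex_extAmple : Convex ℝ (extAmpleCone W.D W.ωp) :=
  convex_iInter fun I => convex_iInter fun _ => convex_angleCone I

lemma zero_mem_closure_extAmple : (0 : Fin r → ℝ) ∈ closure (extAmpleCone W.D W.ωp) := by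
  have htend : Filter.Tendsto (fun n : ℕ => (1 / ((n : ℝ) + 1)) • W.ωp)
      Filter.atTop (nhds 0) := by
    have h1 : Filter.Tendsto (fun n : ℕ => 1 / ((n : ℝ) + 1)) Filter.atTop (nhds 0) :=
      tendsto_one_div_add_atTop_nhds_zero_nat
    have h2 := h1.smul_const W.ωp
    rwa [zero_smul] at h2
  refine mem_closure_of_tendsto htend (Filter.Eventually.of_forall fun n => ?_)
  refine mem_extAmple_iff.mpr fun I hI => ?_
  exact smul_mem_angleCone hI (by positivity)

/-- The key construction: a small perturbation of `ω₀` in the direction of a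
character `D ip` with `D ip · e > 0` lands in the extended ample cone `C_+`. -/
lemma exists_point {ip : Fin m} (hplus : 0 < pairZ (W.D ip) W.e) :
    ∃ ε : ℝ, 0 < ε ∧ W.ω₀ + ε • DR W.D ip ∈ extAmpleCone W.D W.ωp := by
  classical
  set Cp := extAmpleCone W.D W.ωp with hCp
  set G := wall W.e ∩ closure Cp with hG
  have hω₀G : W.ω₀ ∈ G := intrinsicInterior_subset W.interior₀
  have hω₀pair : pairR W.ω₀ W.e = 0 := hω₀G.1
  -- extract a ball inside `G` around `ω₀` within the affine span
  obtain ⟨y, hy, hyx⟩ := mem_intrinsicInterior.mp W.interior₀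
  rw [mem_interior_iff_mem_nhds] at hy
  obtain ⟨δ, hδpos, hball⟩ := Metric.mem_nhds_iff.mp hy
  have h0G : (0 : Fin r → ℝ) ∈ G := ⟨pairR_zero, zero_mem_closure_extAmple W⟩
  have haffeq : (affineSpan ℝ G : Set (Fin r → ℝ))
      = (Submodule.span ℝ (wall W.e) : Set (Fin r → ℝ)) := by
    calc (affineSpan ℝ G : Set (Fin r → ℝ))
        = (affineSpan ℝ (insert 0 G) : Set (Fin r → ℝ)) := by
          rw [Set.insert_eq_self.mpr h0G]
      _ = (Submodule.span ℝ G : Set (Fin r → ℝ)) := affineSpan_insert_zero G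
      _ = (Submodule.span ℝ (wall W.e) : Set (Fin r → ℝ)) := by
          rw [hG, W.wallSpanEq]
  have hkey : ∀ u : Fin r → ℝ, pairR u W.e = 0 → ‖u - W.ω₀‖ < δ → u ∈ G := by
    intro u hu hnear
    have huaff : u ∈ affineSpan ℝ G := by
      have h1 : u ∈ (Submodule.span ℝ (wall W.e) : Set (Fin r → ℝ)) :=
        Submodule.subset_span hu
      rw [← haffeq] at h1
      exact h1
    have hin : (⟨u, huaff⟩ : ↥(affineSpan ℝ G)) ∈ Metric.ball y δ := by
      rw [Metric.mem_ball, Subtype.dist_eq, hyx, dist_eq_norm]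
      exact hnear
    exact hball hin
  -- constants
  set d := DR W.D ip with hd
  have hpd : (0:ℝ) < pairR d W.e := by
    rw [hd, pairR_DR]
    exact_mod_cast hplus
  have hωpC : W.ωp ∈ Cp := ωp_mem_extAmple W
  have hp : 0 < pairR W.ωp W.e := W.posP _ hωpC
  have hratio : 0 ≤ pairR d W.e / pairR W.ωp W.e * ‖W.ωp - W.ω₀‖ :=
    mul_nonneg (div_nonneg hpd.le hp.le) (norm_nonneg _)
  set Cst := 2*(‖d‖ + pairR d W.e / pairR W.ωp W.e * ‖W.ωp - W.ω₀‖) + 1 with hCst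
  have hCstpos : 0 < Cst := by
    have := norm_nonneg d
    rw [hCst]
    linarith
  set ε := min (δ / Cst) (pairR W.ωp W.e / (2 * pairR d W.e)) with hε
  have hεpos : 0 < ε :=
    lt_min (div_pos hδpos hCstpos) (div_pos hp (by linarith))
  set lam := ε * pairR d W.e / pairR W.ωp W.e with hlam
  have hlampos : 0 < lam := div_pos (mul_pos hεpos hpd) hp
  have hlamle : lam ≤ 1/2 := by
    have h1 : ε ≤ pairR W.ωp W.e / (2 * pairR d W.e) := min_le_right _ _
    rw [hlam, div_le_iff₀ hp]
    rw [le_div_iff₀ (by linarith : (0:ℝ) < 2 * pairR d W.e)] at h1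
    nlinarith
  have h1lam : (0:ℝ) < 1 - lam := by linarith
  set x := W.ω₀ + ε • d with hxdef
  set u := (1 - lam)⁻¹ • (x - lam • W.ωp) with hu
  have hlamp : lam * pairR W.ωp W.e = ε * pairR d W.e := by
    rw [hlam]
    exact div_mul_cancel₀ _ hp.ne'
  have hu_pair : pairR u W.e = 0 := by
    rw [hu, pairR_smul, pairR_sub, pairR_smul, hxdef, pairR_add, pairR_smul,
      hω₀pair, zero_add, hlamp]
    ring
  have hsmul_u : (1 - lam) • u = x - lam • W.ωp := by
    rw [hu, smul_inv_smul₀ h1lam.ne']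
  have hvec : u - W.ω₀ = (1 - lam)⁻¹ • (ε • d - lam • (W.ωp - W.ω₀)) := by
    have h2 : (1 - lam) • (u - W.ω₀) = ε • d - lam • (W.ωp - W.ω₀) := by
      rw [smul_sub, hsmul_u, hxdef]
      module
    have h3 := congrArg (fun v => (1 - lam)⁻¹ • v) h2
    simpa [inv_smul_smul₀ h1lam.ne'] using h3
  have hu_near : ‖u - W.ω₀‖ < δ := by
    rw [hvec, norm_smul]
    have h4 : ‖ε • d - lam • (W.ωp - W.ω₀)‖ ≤ ε * ‖d‖ + lam * ‖W.ωp - W.ω₀‖ := by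
      calc ‖ε • d - lam • (W.ωp - W.ω₀)‖
          ≤ ‖ε • d‖ + ‖lam • (W.ωp - W.ω₀)‖ := norm_sub_le _ _
        _ = ε * ‖d‖ + lam * ‖W.ωp - W.ω₀‖ := by
            rw [norm_smul, norm_smul, Real.norm_of_nonneg hεpos.le,
              Real.norm_of_nonneg hlampos.le]
    have h5 : ‖(1 - lam)⁻¹‖ ≤ 2 := by
      rw [Real.norm_of_nonneg (inv_nonneg.mpr h1lam.le)]
      rw [inv_le_comm₀ h1lam (by norm_num)]
      linarith
    have h6 : lam * ‖W.ωp - W.ω₀‖ ≤ ε * (pairR d W.e / pairR W.ωp W.e * ‖W.ωp - W.ω₀‖) := by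
      rw [hlam]
      exact le_of_eq (by ring)
    have h7 : ‖(1 - lam)⁻¹‖ * ‖ε • d - lam • (W.ωp - W.ω₀)‖
        ≤ 2 * (ε * ‖d‖ + ε * (pairR d W.e / pairR W.ωp W.e * ‖W.ωp - W.ω₀‖)) := by
      have hnn : (0:ℝ) ≤ ‖ε • d - lam • (W.ωp - W.ω₀)‖ := norm_nonneg _
      calc ‖(1 - lam)⁻¹‖ * ‖ε • d - lam • (W.ωp - W.ω₀)‖
          ≤ 2 * ‖ε • d - lam • (W.ωp - W.ω₀)‖ := by
            exact mul_le_mul_of_nonneg_right h5 hnn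
        _ ≤ 2 * (ε * ‖d‖ + ε * (pairR d W.e / pairR W.ωp W.e * ‖W.ωp - W.ω₀‖)) := by
            linarith [h4, h6]
    have h8 : 2 * (ε * ‖d‖ + ε * (pairR d W.e / pairR W.ωp W.e * ‖W.ωp - W.ω₀‖))
        = ε * (Cst - 1) := by
      rw [hCst]
      ring
    have h9 : ε * (Cst - 1) < ε * Cst := by
      have h12 : ε * Cst - ε * (Cst - 1) = ε := by ring
      linarith
    have h10 : ε * Cst ≤ δ := by
      have h11 : ε ≤ δ / Cst := min_le_left _ _
      rw [le_div_iff₀ hCstpos] at h11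
      linarith
    calc ‖(1 - lam)⁻¹‖ * ‖ε • d - lam • (W.ωp - W.ω₀)‖
        ≤ 2 * (ε * ‖d‖ + ε * (pairR d W.e / pairR W.ωp W.e * ‖W.ωp - W.ω₀‖)) := h7
      _ = ε * (Cst - 1) := h8
      _ < ε * Cst := h9
      _ ≤ δ := h10
  have huG := hkey u hu_pair hu_near
  have hcombo : lam • W.ωp + (1 - lam) • u = x := by
    rw [hsmul_u]
    module
  refine ⟨ε, hεpos, ?_⟩
  have hint := (isOpen_extAmple W).interior_eq
  show x ∈ extAmpleCone W.D W.ωp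
  rw [← hint, ← hcombo]
  exact (convex_extAmple W).combo_interior_closure_mem_interior
    (by rw [hint]; exact hωpC) huG.2 hlampos (by linarith) (by ring)

lemma lexp_eq_zero {D : Fin m → Fin r → ℤ} {e : Fin r → ℤ} {i : Fin m}
    (h : 0 ≤ pairZ (D i) e) : lexp D e i = 0 := by
  unfold lexp
  rw [max_eq_right (neg_nonpos.mpr h)]
  rfl

end SetupLemmas

/-- The map `F` sends `Ũ` into `U_{ω_+}` (proof of Lemma 6.4 of the paper). -/
theorem blowdown_maps_into {r m : ℕ} (W : WallCrossingSetup r m) :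
    ∀ z ∈ UtildeSet W.D W.ω₀ W.e, blowdownMap W.D W.e z ∈ Uset W.D W.ωp := by
  intro z hz
  obtain ⟨Jt, hJt, hznz⟩ := Set.mem_iUnion₂.mp hz
  have hz' : ∀ i ∈ Jt, z i ≠ 0 := hznz
  have hmaster : ∀ J : Finset (Fin m), ∀ x : Fin r → ℝ,
      x ∈ extAmpleCone W.D W.ωp → x ∈ angleCone (DR W.D) J →
      W.ωp ∈ angleCone (DR W.D) J := by
    intro J x hxC hxJ
    exact master (fun I hI => W.starP.2 I hI)
      (fun K hK => mem_extAmple_iff.mp hxC K hK) W.starP.1 hxJ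
  rcases hJt with h1 | h2
  · -- case 1 : Jt = insert (last m) (I.image castSucc)
    obtain ⟨I, hIthick, rfl⟩ := h1
    obtain ⟨hI0, hIp, -⟩ := hIthick
    obtain ⟨ip, hip⟩ := hIp
    have hipI : ip ∈ I := (Finset.mem_inter.mp hip).1
    have hipM : 0 < pairZ (W.D ip) W.e :=
      (Finset.mem_filter.mp (Finset.mem_inter.mp hip).2).2
    obtain ⟨ε, hε, hxC⟩ := exists_point W hipM
    obtain ⟨a, ha, haeq⟩ := hI0
    have hxI : W.ω₀ + ε • DR W.D ip ∈ angleCone (DR W.D) I := by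
      refine ⟨fun i => a i + (if i = ip then ε else 0), ?_, ?_⟩
      · intro i hi
        show 0 < a i + (if i = ip then ε else 0)
        by_cases h : i = ip
        · rw [if_pos h]
          linarith [ha i hi, hε]
        · rw [if_neg h, add_zero]
          exact ha i hi
      · show W.ω₀ + ε • DR W.D ip
            = ∑ i ∈ I, (a i + (if i = ip then ε else 0)) • DR W.D i
        have hsplit : ∀ i ∈ I, (a i + (if i = ip then ε else 0)) • DR W.D i
            = a i • DR W.D i + (if i = ip then ε • DR W.D ip else 0) := by
          intro i _
          by_cases h : i = ip
          · rw [if_pos h, if_pos h, add_smul, h]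
          · rw [if_neg h, if_neg h, add_zero, add_zero]
        rw [Finset.sum_congr rfl hsplit, Finset.sum_add_distrib,
          Finset.sum_ite_eq' I ip (fun _ => ε • DR W.D ip), if_pos hipI, ← haeq]
    have hIanti : W.ωp ∈ angleCone (DR W.D) I := hmaster I _ hxC hxI
    refine Set.mem_iUnion₂.mpr ⟨I, hIanti, ?_⟩
    intro i hi
    show z (Fin.castSucc i) * z (Fin.last m) ^ lexp W.D W.e i ≠ 0
    refine mul_ne_zero ?_ (pow_ne_zero _ ?_)
    · exact hz' _ (Finset.mem_insert_of_mem (Finset.mem_image_of_mem _ hi))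
    · exact hz' _ (Finset.mem_insert_self _ _)
  · -- case 2 : Jt = I.image castSucc, with I ∩ M₀ a thin anticone
    obtain ⟨I, hIthick, hKthin, rfl⟩ := h2
    obtain ⟨hI0, hIp, -⟩ := hIthick
    obtain ⟨ip, hip⟩ := hIp
    have hipI : ip ∈ I := (Finset.mem_inter.mp hip).1
    have hipM : 0 < pairZ (W.D ip) W.e :=
      (Finset.mem_filter.mp (Finset.mem_inter.mp hip).2).2
    obtain ⟨hK0, -⟩ := hKthin
    obtain ⟨ε, hε, hxC⟩ := exists_point W hipM
    obtain ⟨a, ha, haeq⟩ := hK0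
    have hipK : ip ∉ I ∩ Mzero W.D W.e := by
      intro h
      have h2 := (Finset.mem_filter.mp (Finset.mem_inter.mp h).2).2
      omega
    have hxK : W.ω₀ + ε • DR W.D ip
        ∈ angleCone (DR W.D) (insert ip (I ∩ Mzero W.D W.e)) := by
      refine ⟨fun i => if i = ip then ε else a i, ?_, ?_⟩
      · intro i hi
        show 0 < if i = ip then ε else a i
        rcases Finset.mem_insert.mp hi with rfl | hiK
        · rw [if_pos rfl]
          exact hε
        · have hne : i ≠ ip := by rintro rfl; exact hipK hiK
          rw [if_neg hne]
          exact ha i hiK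
      · show W.ω₀ + ε • DR W.D ip
            = ∑ i ∈ insert ip (I ∩ Mzero W.D W.e), (if i = ip then ε else a i) • DR W.D i
        rw [Finset.sum_insert hipK, if_pos rfl]
        have hcongr : ∀ i ∈ I ∩ Mzero W.D W.e,
            (if i = ip then ε else a i) • DR W.D i = a i • DR W.D i := by
          intro i hi
          have hne : i ≠ ip := by rintro rfl; exact hipK hi
          rw [if_neg hne]
        rw [Finset.sum_congr rfl hcongr, ← haeq]
        exact add_comm _ _
    have hanti : W.ωp ∈ angleCone (DR W.D) (insert ip (I ∩ Mzero W.D W.e)) :=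
      hmaster _ _ hxC hxK
    refine Set.mem_iUnion₂.mpr ⟨_, hanti, ?_⟩
    intro i hi
    show z (Fin.castSucc i) * z (Fin.last m) ^ lexp W.D W.e i ≠ 0
    have hiI : i ∈ I := by
      rcases Finset.mem_insert.mp hi with rfl | hiK
      · exact hipI
      · exact (Finset.mem_inter.mp hiK).1
    have hl0 : lexp W.D W.e i = 0 := by
      apply lexp_eq_zero
      rcases Finset.mem_insert.mp hi with rfl | hiK
      · exact hipM.le
      · have h3 := (Finset.mem_filter.mp (Finset.mem_inter.mp hiK).2).2
        omega
    rw [hl0, pow_zero, mul_one]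
    exact hz' _ (Finset.mem_image_of_mem _ hiI)

end CTC
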